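/- Let c, D > 0 and let G be a finite Borel measure on [0,∞). For every fixed t ≥ 0 and every fixed angular distance γ ∈ (0,π], the integral ∫_0^∞ |R(cos γ, t+h, t)| dh is finite if and only if ∫_{[0, c/(2D))} μ^{−2} G(dμ) < ∞ (with the convention that the integrand equals +∞ at μ = 0). That is, the spherical hyperbolic diffusion random field is short-range dependent if and only if μ^{−2}G(dμ) is integrable in a neighbourhood of the origin. -/

import Mathlib

open MeasureTheory Real Set
set_option maxHeartbeats 1000000

/-- `H̃₁(μ,t)` for the subcritical regime `0 ≤ μ < c/(2D)`. -/
noncomputable def Htilde1 (c D μ t : ℝ) : ℝ :=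
  Real.exp (-(c ^ 2 * t) / (2 * D)) *
    (Real.cosh (c * t * Real.sqrt (c ^ 2 / (4 * D ^ 2) - μ ^ 2)) +
      c / (2 * D * Real.sqrt (c ^ 2 / (4 * D ^ 2) - μ ^ 2)) *
        Real.sinh (c * t * Real.sqrt (c ^ 2 / (4 * D ^ 2) - μ ^ 2)))

/-- `H̃₂(μ,t)` for the supercritical regime `μ > c/(2D)`. -/
noncomputable def Htilde2 (c D μ t : ℝ) : ℝ :=
  Real.exp (-(c ^ 2 * t) / (2 * D)) *
    (Real.cos (c * t * Real.sqrt (μ ^ 2 - c ^ 2 / (4 * D ^ 2))) +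
      c / (2 * D * Real.sqrt (μ ^ 2 - c ^ 2 / (4 * D ^ 2))) *
        Real.sin (c * t * Real.sqrt (μ ^ 2 - c ^ 2 / (4 * D ^ 2))))

/-- `H̃(μ,t)`, pieced together from `H̃₁`, the value at `μ = c/(2D)`, and `H̃₂`. -/
noncomputable def Htilde (c D μ t : ℝ) : ℝ :=
  if μ < c / (2 * D) then Htilde1 c D μ t
  else if μ = c / (2 * D) then Real.exp (-(c ^ 2 * t) / (2 * D)) * (1 + c ^ 2 * t / (2 * D))
  else Htilde2 c D μ t

/-- `_root_.sinc x = sin x / x` for `x ≠ 0`, `_root_.sinc 0 = 1`. -/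
noncomputable def sinc (x : ℝ) : ℝ := if x = 0 then 1 else Real.sin x / x



lemma abs_sinc_le_one (x : ℝ) : |_root_.sinc x| ≤ 1 := by
  unfold _root_.sinc
  split
  · simp
  · rename_i hx
    rw [abs_div]
    exact div_le_one_of_le₀ (Real.abs_sin_le_abs) (abs_nonneg x)

lemma sinc_ge_half {x : ℝ} (h0 : 0 ≤ x) (h1 : x ≤ 1) : 1/2 ≤ _root_.sinc x := by
  unfold _root_.sinc
  split
  · norm_num
  · rename_i hx
    have hxp : 0 < x := lt_of_le_of_ne h0 (Ne.symm hx)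
    rw [le_div_iff₀ hxp]
    have h3 := Real.sin_gt_sub_cube hxp
    nlinarith [pow_le_pow_left₀ h0 h1 3, sq_nonneg x, hxp.le]

lemma lint_exp {a : ℝ} (ha : 0 ≤ a) :
    ∫⁻ h in Ici (0:ℝ), ENNReal.ofReal (Real.exp (-(a*h))) = (ENNReal.ofReal a)⁻¹ := by
  rcases eq_or_lt_of_le ha with rfl | ha
  · simp [Real.volume_Ici]
  · rw [← MeasureTheory.restrict_Ioi_eq_restrict_Ici,
      ← ofReal_integral_eq_lintegral_ofReal
        (by simpa [neg_mul] using (exp_neg_integrableOn_Ioi 0 ha).integrable)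
        (ae_of_all _ fun x => (Real.exp_pos _).le)]
    have : (∫ x in Ioi (0:ℝ), Real.exp (-(a*x))) = a⁻¹ := by
      have := integral_comp_mul_left_Ioi (fun u => Real.exp (-u)) 0 ha
      simp only [mul_zero, integral_exp_neg_Ioi, neg_zero, Real.exp_zero, smul_eq_mul, mul_one]
        at this
      simpa using this
    rw [this, ENNReal.ofReal_inv_of_pos ha]

section bounds
variable {c D μ s : ℝ}

lemma sinh_le_mul_exp {y : ℝ} (hy : 0 ≤ y) : Real.sinh y ≤ y * Real.exp y := by
  rw [Real.sinh_eq]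
  have h1 : (-(2*y)) + 1 ≤ Real.exp (-(2*y)) := Real.add_one_le_exp _
  have h2 : Real.exp (-(2*y)) = Real.exp (-y) * Real.exp (-y) := by
    rw [← Real.exp_add]; ring_nf
  have h3 : Real.exp y * Real.exp (-y) = 1 := by rw [← Real.exp_add]; simp
  nlinarith [Real.exp_pos y, Real.exp_pos (-y)]

lemma cosh_le_exp' {y : ℝ} (hy : 0 ≤ y) : Real.cosh y ≤ Real.exp y := by
  rw [Real.cosh_eq]
  have : Real.exp (-y) ≤ Real.exp y := Real.exp_le_exp.mpr (by linarith)
  linarith [Real.exp_pos y]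

lemma sinh_le_half_exp {y : ℝ} (hy : 0 ≤ y) : Real.sinh y ≤ Real.exp y / 2 := by
  rw [Real.sinh_eq]
  have := Real.exp_pos (-y)
  linarith

lemma one_add_le_sixteen_exp {x : ℝ} : 1 + x ≤ 16 * Real.exp (x/16) := by
  have := Real.add_one_le_exp (x/16)
  nlinarith

lemma Htilde_ge (hc : 0 < c) (hD : 0 < D) (hμ0 : 0 ≤ μ) (hμ : μ < c/(2*D)) (hs : 0 ≤ s) :
    Real.exp (-(2*D*μ^2*s)) / 2 ≤ Htilde c D μ s := by
  have hb : 0 < c/(2*D) := div_pos hc (by positivity)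
  set b := c/(2*D) with hbdef
  have hb2 : c ^ 2 / (4 * D ^ 2) = b ^ 2 := by
    rw [hbdef, div_pow]; ring_nf
  set l := Real.sqrt (c ^ 2 / (4 * D ^ 2) - μ ^ 2) with hldef
  have hargpos : 0 < c ^ 2 / (4 * D ^ 2) - μ ^ 2 := by rw [hb2]; nlinarith
  have hlpos : 0 < l := Real.sqrt_pos.mpr hargpos
  have hl2 : l ^ 2 = b ^ 2 - μ ^ 2 := by
    rw [hldef, Real.sq_sqrt hargpos.le, hb2]
  have hlb : l ≤ b := by nlinarith
  rw [Htilde, if_pos hμ, Htilde1]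
  have hE : 0 < Real.exp (-(c ^ 2 * s) / (2 * D)) := Real.exp_pos _
  have hy : 0 ≤ c * s * l := by positivity
  have hsinh : 0 ≤ Real.sinh (c * s * l) := Real.sinh_nonneg_iff.mpr hy
  have hk : 0 ≤ c / (2 * D * l) := by positivity
  have step1 : Real.exp (-(c ^ 2 * s) / (2 * D)) * Real.cosh (c * s * l) ≤
      Real.exp (-(c ^ 2 * s) / (2 * D)) * (Real.cosh (c * s * l) +
        c / (2 * D * l) * Real.sinh (c * s * l)) := by
    apply mul_le_mul_of_nonneg_left _ hE.le
    nlinarith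
  refine le_trans ?_ step1
  have hcosh : Real.exp (c * s * l) / 2 ≤ Real.cosh (c * s * l) := by
    rw [Real.cosh_eq]
    have := (Real.exp_pos (-(c * s * l))).le
    linarith
  have step2 : Real.exp (-(c ^ 2 * s) / (2 * D)) * (Real.exp (c * s * l) / 2) ≤
      Real.exp (-(c ^ 2 * s) / (2 * D)) * Real.cosh (c * s * l) :=
    mul_le_mul_of_nonneg_left hcosh hE.le
  refine le_trans ?_ step2
  have heq : Real.exp (-(c ^ 2 * s) / (2 * D)) * (Real.exp (c * s * l) / 2)
      = Real.exp (-(c ^ 2 * s) / (2 * D) + c * s * l) / 2 := by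
    rw [Real.exp_add]; ring
  rw [heq, div_le_div_iff_of_pos_right (by norm_num)]
  apply Real.exp_le_exp.mpr
  -- need: -(2*D*μ^2*s) ≤ -(c^2*s)/(2*D) + c*s*l
  have hcb : c ^ 2 / (2*D) = c * b := by rw [hbdef]; field_simp
  have key : b - l ≤ μ^2 / b := by
    rw [le_div_iff₀ hb]
    nlinarith
  have h2 : c * (b - l) * s ≤ 2*D*μ^2*s := by
    have : c * (b - l) ≤ c * (μ^2 / b) := by
      apply mul_le_mul_of_nonneg_left key hc.le
    have hcb2 : c * (μ^2/b) = 2*D*μ^2 := by rw [hbdef]; field_simp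
    nlinarith
  have hx : -(c ^ 2 * s) / (2 * D) = -(c*b*s) := by rw [hbdef]; ring
  rw [hx]
  have hexp : c*(b-l)*s = c*b*s - c*s*l := by ring
  linarith
end bounds

section upper
variable {c D μ s : ℝ}

lemma Htilde_le_low (hc : 0 < c) (hD : 0 < D) (hμ0 : 0 ≤ μ) (hμ : μ ≤ c/(2*D)/2)
    (hs : 0 ≤ s) : Htilde c D μ s ≤ 2 * Real.exp (-(D*μ^2*s)) := by
  have hb : 0 < c/(2*D) := div_pos hc (by positivity)
  set b := c/(2*D) with hbdef
  have hμb : μ < b := lt_of_le_of_lt hμ (by linarith)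
  have hb2 : c ^ 2 / (4 * D ^ 2) = b ^ 2 := by rw [hbdef, div_pow]; ring_nf
  set l := Real.sqrt (c ^ 2 / (4 * D ^ 2) - μ ^ 2) with hldef
  have hargpos : 0 < c ^ 2 / (4 * D ^ 2) - μ ^ 2 := by rw [hb2]; nlinarith
  have hlpos : 0 < l := Real.sqrt_pos.mpr hargpos
  have hl2 : l ^ 2 = b ^ 2 - μ ^ 2 := by rw [hldef, Real.sq_sqrt hargpos.le, hb2]
  have hlb : l ≤ b := by nlinarith
  have hlge : b/2 ≤ l := by nlinarith
  rw [Htilde, if_pos hμb, Htilde1]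
  have hE : 0 < Real.exp (-(c ^ 2 * s) / (2 * D)) := Real.exp_pos _
  have hy : 0 ≤ c * s * l := by positivity
  have hk2 : c / (2 * D * l) ≤ 2 := by
    rw [div_le_iff₀ (by positivity)]
    have hlge' : c ≤ 4*D*l := by
      rw [hbdef, div_div] at hlge
      have := (div_le_iff₀ (by positivity : (0:ℝ) < 2*D*2)).mp hlge
      linarith
    linarith
  have hk0 : 0 ≤ c / (2 * D * l) := by positivity
  have hsinh : 0 ≤ Real.sinh (c * s * l) := Real.sinh_nonneg_iff.mpr hy
  have hin : Real.cosh (c * s * l) + c / (2 * D * l) * Real.sinh (c * s * l)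
      ≤ 2 * Real.exp (c * s * l) := by
    have h1 := cosh_le_exp' hy
    have h2 := sinh_le_half_exp hy
    have h3 : c / (2 * D * l) * Real.sinh (c * s * l) ≤ 2 * Real.sinh (c * s * l) :=
      mul_le_mul_of_nonneg_right hk2 hsinh
    linarith
  calc Real.exp (-(c ^ 2 * s) / (2 * D)) *
        (Real.cosh (c * s * l) + c / (2 * D * l) * Real.sinh (c * s * l))
      ≤ Real.exp (-(c ^ 2 * s) / (2 * D)) * (2 * Real.exp (c * s * l)) :=
        mul_le_mul_of_nonneg_left hin hE.le
    _ = 2 * Real.exp (-(c ^ 2 * s) / (2 * D) + c * s * l) := by rw [Real.exp_add]; ring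
    _ ≤ 2 * Real.exp (-(D*μ^2*s)) := by
        apply mul_le_mul_of_nonneg_left _ (by norm_num)
        apply Real.exp_le_exp.mpr
        have hx : -(c ^ 2 * s) / (2 * D) = -(c*b*s) := by rw [hbdef]; ring
        rw [hx]
        have hc2 : c = 2*D*b := by rw [hbdef]; field_simp
        have key : μ^2 ≤ (b - l)*(2*b) := by nlinarith
        have key2 : D*μ^2*s ≤ D*s*((b - l)*(2*b)) := by
          have := mul_le_mul_of_nonneg_left key (by positivity : (0:ℝ) ≤ D*s)
          nlinarith
        have hrw : D*s*((b - l)*(2*b)) = c*b*s - c*s*l := by rw [hc2]; ring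
        linarith

lemma Htilde_le_high (hc : 0 < c) (hD : 0 < D) (hμ : c/(2*D)/2 ≤ μ) (hs : 0 ≤ s) :
    |Htilde c D μ s| ≤ 16 * Real.exp (-(c^2*s/(32*D))) := by
  have hb : 0 < c/(2*D) := div_pos hc (by positivity)
  set b := c/(2*D) with hbdef
  have hμ0 : 0 ≤ μ := le_trans (by linarith) hμ
  have hb2 : c ^ 2 / (4 * D ^ 2) = b ^ 2 := by rw [hbdef, div_pow]; ring_nf
  set x := c^2*s/(2*D) with hxdef
  have hx0 : 0 ≤ x := by positivity
  have hEeq : -(c ^ 2 * s) / (2 * D) = -x := by rw [hxdef]; ring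
  have hfin : ∀ y : ℝ, y ≤ 7*x/8 → (1+x) * Real.exp (y - x) ≤ 16 * Real.exp (-(c^2*s/(32*D))) := by
    intro y hy
    have h1 : (1+x) * Real.exp (y - x) ≤ 16 * Real.exp (x/16) * Real.exp (y - x) :=
      mul_le_mul_of_nonneg_right one_add_le_sixteen_exp (Real.exp_pos _).le
    have h2 : 16 * Real.exp (x/16) * Real.exp (y - x) = 16 * Real.exp (x/16 + (y - x)) := by
      rw [Real.exp_add]; ring
    have h3 : x/16 + (y - x) ≤ -(c^2*s/(32*D)) := by
      have : -(c^2*s/(32*D)) = -(x/16) := by rw [hxdef]; ring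
      rw [this]; linarith
    calc (1+x) * Real.exp (y - x) ≤ 16 * Real.exp (x/16 + (y - x)) := by rw [← h2]; exact h1
      _ ≤ 16 * Real.exp (-(c^2*s/(32*D))) := by
          apply mul_le_mul_of_nonneg_left (Real.exp_le_exp.mpr h3) (by norm_num)
  rcases lt_trichotomy μ b with hlt | heq | hgt
  · -- b/2 ≤ μ < b
    have hpos : 0 ≤ Htilde c D μ s :=
      le_trans (by positivity) (Htilde_ge hc hD hμ0 hlt hs)
    rw [abs_of_nonneg hpos]
    set l := Real.sqrt (c ^ 2 / (4 * D ^ 2) - μ ^ 2) with hldef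
    have hargpos : 0 < c ^ 2 / (4 * D ^ 2) - μ ^ 2 := by rw [hb2]; nlinarith
    have hlpos : 0 < l := Real.sqrt_pos.mpr hargpos
    have hl2 : l ^ 2 = b ^ 2 - μ ^ 2 := by rw [hldef, Real.sq_sqrt hargpos.le, hb2]
    have hl78 : l ≤ 7*b/8 := by nlinarith
    rw [Htilde, if_pos hlt, Htilde1, ← hldef]
    have hy : 0 ≤ c * s * l := by positivity
    have hsinh : 0 ≤ Real.sinh (c * s * l) := Real.sinh_nonneg_iff.mpr hy
    have hk0 : 0 ≤ c / (2 * D * l) := by positivity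
    have hky : c / (2 * D * l) * (c * s * l) = x := by
      rw [hxdef]; field_simp
    have hin : Real.cosh (c * s * l) + c / (2 * D * l) * Real.sinh (c * s * l)
        ≤ (1 + x) * Real.exp (c * s * l) := by
      have h1 := cosh_le_exp' hy
      have h2 : c / (2 * D * l) * Real.sinh (c * s * l)
          ≤ c / (2 * D * l) * ((c * s * l) * Real.exp (c * s * l)) :=
        mul_le_mul_of_nonneg_left (sinh_le_mul_exp hy) hk0
      have h3 : c / (2 * D * l) * ((c * s * l) * Real.exp (c * s * l))
          = x * Real.exp (c * s * l) := by rw [← hky]; ring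
      nlinarith [Real.exp_pos (c * s * l)]
    have hE : 0 < Real.exp (-(c ^ 2 * s) / (2 * D)) := Real.exp_pos _
    calc Real.exp (-(c ^ 2 * s) / (2 * D)) *
          (Real.cosh (c * s * l) + c / (2 * D * l) * Real.sinh (c * s * l))
        ≤ Real.exp (-(c ^ 2 * s) / (2 * D)) * ((1 + x) * Real.exp (c * s * l)) :=
          mul_le_mul_of_nonneg_left hin hE.le
      _ = (1 + x) * Real.exp (c * s * l - x) := by rw [hEeq, Real.exp_sub, Real.exp_neg]; ring
      _ ≤ 16 * Real.exp (-(c^2*s/(32*D))) := by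
          apply hfin
          have hcb : c * s * b = x := by rw [hxdef, hbdef]; ring
          nlinarith [mul_le_mul_of_nonneg_left hl78 (by positivity : (0:ℝ) ≤ c * s)]
  · -- μ = b
    rw [Htilde, if_neg (by rw [← hbdef, heq]; exact lt_irrefl _), if_pos (by rw [← hbdef]; exact heq)]
    have hxx : c ^ 2 * s / (2 * D) = x := by rw [hxdef]
    rw [hxx, hEeq]
    rw [abs_of_nonneg (by positivity)]
    have : Real.exp (-x) * (1 + x) = (1 + x) * Real.exp (0 - x) := by ring_nf
    rw [this]
    exact hfin 0 (by linarith)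
  · -- μ > b
    rw [Htilde, if_neg (by rw [← hbdef]; exact not_lt.mpr hgt.le),
      if_neg (by rw [← hbdef]; exact ne_of_gt hgt), Htilde2]
    set l := Real.sqrt (μ ^ 2 - c ^ 2 / (4 * D ^ 2)) with hldef
    have hargpos : 0 < μ ^ 2 - c ^ 2 / (4 * D ^ 2) := by rw [hb2]; nlinarith
    have hlpos : 0 < l := Real.sqrt_pos.mpr hargpos
    have hy : 0 ≤ c * s * l := by positivity
    have hk0 : 0 ≤ c / (2 * D * l) := by positivity
    have hky : c / (2 * D * l) * (c * s * l) = x := by rw [hxdef]; field_simp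
    have habs : |Real.cos (c * s * l) + c / (2 * D * l) * Real.sin (c * s * l)| ≤ 1 + x := by
      refine le_trans (abs_add_le _ _) ?_
      have h1 : |Real.cos (c * s * l)| ≤ 1 := Real.abs_cos_le_one _
      have h2 : |c / (2 * D * l) * Real.sin (c * s * l)| ≤ x := by
        rw [abs_mul, abs_of_nonneg hk0]
        calc c / (2 * D * l) * |Real.sin (c * s * l)|
            ≤ c / (2 * D * l) * (c * s * l) := by
              apply mul_le_mul_of_nonneg_left _ hk0
              have := Real.abs_sin_le_abs (x := c * s * l)
              rwa [abs_of_nonneg hy] at this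
          _ = x := hky
      linarith
    rw [abs_mul, Real.abs_exp, hEeq]
    calc Real.exp (-x) * |Real.cos (c * s * l) + c / (2 * D * l) * Real.sin (c * s * l)|
        ≤ Real.exp (-x) * (1 + x) := mul_le_mul_of_nonneg_left habs (Real.exp_pos _).le
      _ = (1 + x) * Real.exp (0 - x) := by ring_nf
      _ ≤ 16 * Real.exp (-(c^2*s/(32*D))) := hfin 0 (by linarith)

lemma Htilde_abs_le (hc : 0 < c) (hD : 0 < D) (hμ0 : 0 ≤ μ) (hs : 0 ≤ s) :
    |Htilde c D μ s| ≤ 16 := by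
  rcases le_or_gt μ (c/(2*D)/2) with h | h
  · have hb : 0 < c/(2*D) := div_pos hc (by positivity)
    have hpos : 0 ≤ Htilde c D μ s :=
      le_trans (by positivity) (Htilde_ge hc hD hμ0 (by linarith) hs)
    rw [abs_of_nonneg hpos]
    calc Htilde c D μ s ≤ 2 * Real.exp (-(D*μ^2*s)) := Htilde_le_low hc hD hμ0 h hs
      _ ≤ 2 * 1 := by
          apply mul_le_mul_of_nonneg_left _ (by norm_num)
          rw [Real.exp_le_one_iff]
          exact neg_nonpos.mpr (by positivity)
      _ ≤ 16 := by norm_num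
  · calc |Htilde c D μ s| ≤ 16 * Real.exp (-(c^2*s/(32*D))) := Htilde_le_high hc hD h.le hs
      _ ≤ 16 * 1 := by
          apply mul_le_mul_of_nonneg_left _ (by norm_num)
          rw [Real.exp_le_one_iff]
          exact neg_nonpos.mpr (by positivity)
      _ = 16 := by norm_num
end upper


lemma measurable_sinc : Measurable _root_.sinc := by
  unfold _root_.sinc
  exact Measurable.ite (measurableSet_eq) measurable_const
    (Measurable.div Real.measurable_sin measurable_id)

lemma measurable_Htilde_prod (c D t : ℝ) :
    Measurable (fun p : ℝ × ℝ => Htilde c D p.1 (t + p.2)) := by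
  unfold Htilde Htilde1 Htilde2
  apply Measurable.ite
  · exact measurableSet_lt measurable_fst measurable_const
  · fun_prop
  · apply Measurable.ite
    · exact measurableSet_eq_fun measurable_fst measurable_const
    · fun_prop
    · fun_prop

section main
open ENNReal

lemma srd_FmeasAux (c D t sγ : ℝ) :
    Measurable (fun p : ℝ × ℝ =>
      _root_.sinc (2 * p.1 * sγ) * Htilde c D p.1 (t + p.2) * Htilde c D p.1 t) := by
  have h1 : Measurable fun p : ℝ × ℝ => _root_.sinc (2 * p.1 * sγ) :=
    _root_.measurable_sinc.comp (by fun_prop)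
  have h2 := measurable_Htilde_prod c D t
  have h3 : Measurable fun p : ℝ × ℝ => Htilde c D p.1 t := by
    have heq : (fun p : ℝ × ℝ => Htilde c D p.1 t)
        = (fun p : ℝ × ℝ => Htilde c D p.1 (t + p.2)) ∘ (fun a : ℝ × ℝ => (a.1, (0:ℝ))) := by
      funext p; simp
    rw [heq]
    exact (measurable_Htilde_prod c D t).comp
      (measurable_fst.prodMk measurable_const)
  exact (h1.mul h2).mul h3

lemma srd_Fbound (c D : ℝ) (hc : 0 < c) (hD : 0 < D) (t : ℝ) (ht : 0 ≤ t) (sγ : ℝ)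
    {μ h : ℝ} (hμ : 0 ≤ μ) (hh : 0 ≤ h) :
    |_root_.sinc (2 * μ * sγ) * Htilde c D μ (t + h) * Htilde c D μ t| ≤ 256 := by
  have h1 := _root_.abs_sinc_le_one (2 * μ * sγ)
  have h2 := Htilde_abs_le hc hD hμ (by linarith : (0:ℝ) ≤ t + h)
  have h3 := Htilde_abs_le hc hD hμ ht
  have e : |_root_.sinc (2 * μ * sγ) * Htilde c D μ (t + h) * Htilde c D μ t|
      = |_root_.sinc (2 * μ * sγ)| * |Htilde c D μ (t + h)| * |Htilde c D μ t| := by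
    rw [abs_mul, abs_mul]
  rw [e]
  calc |_root_.sinc (2 * μ * sγ)| * |Htilde c D μ (t + h)| * |Htilde c D μ t|
      ≤ 1 * 16 * 16 :=
        mul_le_mul (mul_le_mul h1 h2 (abs_nonneg _) zero_le_one) h3 (abs_nonneg _)
          (by norm_num)
    _ = 256 := by norm_num

lemma srd_Fint (c D : ℝ) (hc : 0 < c) (hD : 0 < D)
    (G : MeasureTheory.Measure ℝ) [MeasureTheory.IsFiniteMeasure G] (t : ℝ) (ht : 0 ≤ t)
    (sγ : ℝ) {h : ℝ} (hh : 0 ≤ h) :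
    IntegrableOn (fun μ => _root_.sinc (2 * μ * sγ) * Htilde c D μ (t + h) * Htilde c D μ t)
      (Ici 0) G := by
  have hm : AEStronglyMeasurable
      (fun μ => _root_.sinc (2 * μ * sγ) * Htilde c D μ (t + h) * Htilde c D μ t)
      (G.restrict (Ici 0)) := by
    have := (srd_FmeasAux c D t sγ).comp
      ((measurable_id.prodMk measurable_const) : Measurable fun μ : ℝ => (μ, h))
    exact this.aestronglyMeasurable
  refine Integrable.mono' (integrable_const 256) hm ?_
  filter_upwards [ae_restrict_mem measurableSet_Ici] with μ hμ
  rw [Real.norm_eq_abs]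
  exact srd_Fbound c D hc hD t ht sγ hμ hh

lemma srd_backward (c D : ℝ) (hc : 0 < c) (hD : 0 < D)
    (G : MeasureTheory.Measure ℝ) [MeasureTheory.IsFiniteMeasure G] (t : ℝ) (ht : 0 ≤ t)
    (sγ : ℝ)
    (hG : (∫⁻ μ in Ico (0:ℝ) (c/(2*D)), (ENNReal.ofReal (μ^2))⁻¹ ∂G) < ⊤) :
    (∫⁻ h in Ici (0:ℝ), ENNReal.ofReal
        |∫ μ in Ici (0:ℝ), _root_.sinc (2*μ*sγ) * Htilde c D μ (t+h) * Htilde c D μ t ∂G|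
      ∂volume) < ⊤ := by
  have hb : 0 < c / (2*D) := div_pos hc (by positivity)
  set b := c / (2*D) with hbdef
  set F : ℝ → ℝ → ℝ :=
    fun μ h => _root_.sinc (2*μ*sγ) * Htilde c D μ (t+h) * Htilde c D μ t with hFdef
  set Bnd : ℝ → ℝ≥0∞ := fun μ =>
    if μ < b/2 then ENNReal.ofReal 32 * (ENNReal.ofReal (D*μ^2))⁻¹
    else ENNReal.ofReal 256 * (ENNReal.ofReal (c^2/(32*D)))⁻¹ with hBnddef
  -- Step 1
  have step1 : (∫⁻ h in Ici (0:ℝ), ENNReal.ofReal |∫ μ in Ici (0:ℝ), F μ h ∂G| ∂volume)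
      ≤ ∫⁻ h in Ici (0:ℝ), ∫⁻ μ in Ici (0:ℝ), ENNReal.ofReal |F μ h| ∂G ∂volume := by
    refine lintegral_mono_ae ?_
    filter_upwards [ae_restrict_mem measurableSet_Ici] with h hh
    calc ENNReal.ofReal |∫ μ in Ici (0:ℝ), F μ h ∂G|
        ≤ ENNReal.ofReal (∫ μ in Ici (0:ℝ), |F μ h| ∂G) := by
          apply ENNReal.ofReal_le_ofReal
          simpa [Real.norm_eq_abs] using
            norm_integral_le_integral_norm (μ := G.restrict (Ici 0)) (f := fun μ => F μ h)
      _ = ∫⁻ μ in Ici (0:ℝ), ENNReal.ofReal |F μ h| ∂G :=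
          ofReal_integral_eq_lintegral_ofReal (srd_Fint c D hc hD G t ht sγ hh).abs
            (ae_of_all _ fun μ => abs_nonneg _)
  -- Step 2 : swap
  have step2 : (∫⁻ h in Ici (0:ℝ), ∫⁻ μ in Ici (0:ℝ), ENNReal.ofReal |F μ h| ∂G ∂volume)
      = ∫⁻ μ in Ici (0:ℝ), ∫⁻ h in Ici (0:ℝ), ENNReal.ofReal |F μ h| ∂volume ∂G := by
    apply lintegral_lintegral_swap
    apply Measurable.aemeasurable
    have : Measurable fun q : ℝ × ℝ => F q.2 q.1 :=
      (srd_FmeasAux c D t sγ).comp measurable_swap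
    exact (measurable_abs.comp this).ennreal_ofReal
  -- Step 3 : inner bound
  have step3 : ∀ μ ∈ Ici (0:ℝ),
      (∫⁻ h in Ici (0:ℝ), ENNReal.ofReal |F μ h| ∂volume) ≤ Bnd μ := by
    intro μ hμ0
    by_cases hcase : μ < b/2
    · have hle : ∀ h ∈ Ici (0:ℝ),
          ENNReal.ofReal |F μ h| ≤ ENNReal.ofReal (32 * Real.exp (-(D*μ^2*h))) := by
        intro h hh
        apply ENNReal.ofReal_le_ofReal
        have h1 := _root_.abs_sinc_le_one (2*μ*sγ)
        have hth : (0:ℝ) ≤ t + h := by simp only [mem_Ici] at hh; linarith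
        have hpos : 0 ≤ Htilde c D μ (t+h) :=
          le_trans (by positivity) (Htilde_ge hc hD hμ0 (by rw [← hbdef]; linarith) hth)
        have h2 : |Htilde c D μ (t+h)| ≤ 2 * Real.exp (-(D*μ^2*(t+h))) := by
          rw [abs_of_nonneg hpos]
          exact Htilde_le_low hc hD hμ0 (by rw [← hbdef]; linarith) hth
        have h3 := Htilde_abs_le hc hD hμ0 ht
        have e : |F μ h| = |_root_.sinc (2*μ*sγ)| * |Htilde c D μ (t+h)| * |Htilde c D μ t| := by
          rw [hFdef]; rw [abs_mul, abs_mul]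
        rw [e]
        calc |_root_.sinc (2*μ*sγ)| * |Htilde c D μ (t+h)| * |Htilde c D μ t|
            ≤ 1 * (2 * Real.exp (-(D*μ^2*(t+h)))) * 16 :=
              mul_le_mul (mul_le_mul h1 h2 (abs_nonneg _) zero_le_one) h3 (abs_nonneg _)
                (by positivity)
          _ = 32 * Real.exp (-(D*μ^2*(t+h))) := by ring
          _ ≤ 32 * Real.exp (-(D*μ^2*h)) := by
              apply mul_le_mul_of_nonneg_left _ (by norm_num)
              apply Real.exp_le_exp.mpr
              simp only [mem_Ici] at hh
              have h0 : 0 ≤ D*μ^2*t := by positivity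
              nlinarith
      calc (∫⁻ h in Ici (0:ℝ), ENNReal.ofReal |F μ h| ∂volume)
          ≤ ∫⁻ h in Ici (0:ℝ), ENNReal.ofReal (32 * Real.exp (-(D*μ^2*h))) ∂volume :=
            setLIntegral_mono (by fun_prop) hle
        _ = ENNReal.ofReal 32 * ∫⁻ h in Ici (0:ℝ), ENNReal.ofReal (Real.exp (-(D*μ^2*h))) ∂volume := by
            simp_rw [ENNReal.ofReal_mul (by norm_num : (0:ℝ) ≤ 32)]
            exact lintegral_const_mul' _ _ ENNReal.ofReal_ne_top
        _ = ENNReal.ofReal 32 * (ENNReal.ofReal (D*μ^2))⁻¹ := by rw [lint_exp (by positivity)]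
        _ = Bnd μ := by rw [hBnddef]; simp only [if_pos hcase]
    · have hμb2 : b/2 ≤ μ := not_lt.mp hcase
      have hle : ∀ h ∈ Ici (0:ℝ),
          ENNReal.ofReal |F μ h| ≤ ENNReal.ofReal (256 * Real.exp (-(c^2/(32*D)*h))) := by
        intro h hh
        apply ENNReal.ofReal_le_ofReal
        have h1 := _root_.abs_sinc_le_one (2*μ*sγ)
        have hth : (0:ℝ) ≤ t + h := by simp only [mem_Ici] at hh; linarith
        have h2 : |Htilde c D μ (t+h)| ≤ 16 * Real.exp (-(c^2*(t+h)/(32*D))) :=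
          Htilde_le_high hc hD (by rw [← hbdef]; exact hμb2) hth
        have h3 := Htilde_abs_le hc hD hμ0 ht
        have e : |F μ h| = |_root_.sinc (2*μ*sγ)| * |Htilde c D μ (t+h)| * |Htilde c D μ t| := by
          rw [hFdef]; rw [abs_mul, abs_mul]
        rw [e]
        calc |_root_.sinc (2*μ*sγ)| * |Htilde c D μ (t+h)| * |Htilde c D μ t|
            ≤ 1 * (16 * Real.exp (-(c^2*(t+h)/(32*D)))) * 16 :=
              mul_le_mul (mul_le_mul h1 h2 (abs_nonneg _) zero_le_one) h3 (abs_nonneg _)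
                (by positivity)
          _ = 256 * Real.exp (-(c^2*(t+h)/(32*D))) := by ring
          _ ≤ 256 * Real.exp (-(c^2/(32*D)*h)) := by
              apply mul_le_mul_of_nonneg_left _ (by norm_num)
              apply Real.exp_le_exp.mpr
              simp only [mem_Ici] at hh
              rw [neg_le_neg_iff, div_mul_eq_mul_div]
              gcongr
              linarith
      calc (∫⁻ h in Ici (0:ℝ), ENNReal.ofReal |F μ h| ∂volume)
          ≤ ∫⁻ h in Ici (0:ℝ), ENNReal.ofReal (256 * Real.exp (-(c^2/(32*D)*h))) ∂volume :=
            setLIntegral_mono (by fun_prop) hle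
        _ = ENNReal.ofReal 256 * ∫⁻ h in Ici (0:ℝ),
              ENNReal.ofReal (Real.exp (-(c^2/(32*D)*h))) ∂volume := by
            simp_rw [ENNReal.ofReal_mul (by norm_num : (0:ℝ) ≤ 256)]
            exact lintegral_const_mul' _ _ ENNReal.ofReal_ne_top
        _ = ENNReal.ofReal 256 * (ENNReal.ofReal (c^2/(32*D)))⁻¹ := by
            rw [lint_exp (by positivity)]
        _ = Bnd μ := by rw [hBnddef]; simp only [if_neg hcase]
  -- Step 4 : the bound integral is finite
  have step4 : (∫⁻ μ in Ici (0:ℝ), Bnd μ ∂G) < ⊤ := by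
    have hsplit : Ici (0:ℝ) = Ico 0 (b/2) ∪ Ici (b/2) :=
      (Ico_union_Ici_eq_Ici (by positivity)).symm
    have hdisj : Disjoint (Ico (0:ℝ) (b/2)) (Ici (b/2)) := by
      rw [Set.disjoint_left]
      intro a ha hb'
      exact absurd hb' (not_le.mpr ha.2)
    rw [hsplit, lintegral_union measurableSet_Ici hdisj]
    have hfirst : (∫⁻ μ in Ico (0:ℝ) (b/2), Bnd μ ∂G)
        ≤ (ENNReal.ofReal 32 * (ENNReal.ofReal D)⁻¹) * ∫⁻ μ in Ico (0:ℝ) b,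
            (ENNReal.ofReal (μ^2))⁻¹ ∂G := by
      have hcongr : ∫⁻ μ in Ico (0:ℝ) (b/2), Bnd μ ∂G
          = ∫⁻ μ in Ico (0:ℝ) (b/2),
              (ENNReal.ofReal 32 * (ENNReal.ofReal D)⁻¹) * (ENNReal.ofReal (μ^2))⁻¹ ∂G := by
        apply setLIntegral_congr_fun measurableSet_Ico
        intro μ hμ
        rw [hBnddef]
        simp only [if_pos hμ.2]
        rw [ENNReal.ofReal_mul hD.le,
          ENNReal.mul_inv (Or.inl (by simpa using hD)) (Or.inl ENNReal.ofReal_ne_top), mul_assoc]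
      rw [hcongr, lintegral_const_mul' _ _
        (ENNReal.mul_ne_top ENNReal.ofReal_ne_top (ENNReal.inv_ne_top.mpr (by simpa using hD)))]
      apply mul_le_mul_right (lintegral_mono_set (Ico_subset_Ico_right (by linarith)))
    have hsecond : (∫⁻ μ in Ici (b/2), Bnd μ ∂G)
        = (ENNReal.ofReal 256 * (ENNReal.ofReal (c^2/(32*D)))⁻¹) * G (Ici (b/2)) := by
      have hcongr : ∫⁻ μ in Ici (b/2), Bnd μ ∂G
          = ∫⁻ _ in Ici (b/2), (ENNReal.ofReal 256 * (ENNReal.ofReal (c^2/(32*D)))⁻¹) ∂G := by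
        apply setLIntegral_congr_fun measurableSet_Ici
        intro μ hμ
        rw [hBnddef]
        simp only [if_neg (not_lt.mpr (mem_Ici.mp hμ))]
      rw [hcongr, setLIntegral_const]
    apply ENNReal.add_lt_top.mpr
    constructor
    · exact lt_of_le_of_lt hfirst (ENNReal.mul_lt_top
        (ENNReal.mul_lt_top ENNReal.ofReal_lt_top
          (ENNReal.inv_lt_top.mpr (by simpa using hD))) hG)
    · rw [hsecond]
      exact ENNReal.mul_lt_top (ENNReal.mul_lt_top ENNReal.ofReal_lt_top
        (ENNReal.inv_lt_top.mpr (by simpa using (by positivity : (0:ℝ) < c^2/(32*D)))))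
        (measure_lt_top _ _)
  calc (∫⁻ h in Ici (0:ℝ), ENNReal.ofReal |∫ μ in Ici (0:ℝ), F μ h ∂G| ∂volume)
      ≤ ∫⁻ h in Ici (0:ℝ), ∫⁻ μ in Ici (0:ℝ), ENNReal.ofReal |F μ h| ∂G ∂volume := step1
    _ = ∫⁻ μ in Ici (0:ℝ), ∫⁻ h in Ici (0:ℝ), ENNReal.ofReal |F μ h| ∂volume ∂G := step2
    _ ≤ ∫⁻ μ in Ici (0:ℝ), Bnd μ ∂G := by
        refine lintegral_mono_ae ?_
        filter_upwards [ae_restrict_mem measurableSet_Ici] with μ hμ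
        exact step3 μ hμ
    _ < ⊤ := step4


lemma srd_forward (c D : ℝ) (hc : 0 < c) (hD : 0 < D)
    (G : MeasureTheory.Measure ℝ) [MeasureTheory.IsFiniteMeasure G] (t : ℝ) (ht : 0 ≤ t)
    (sγ : ℝ) (hsγ0 : 0 < sγ) (hsγ1 : sγ ≤ 1)
    (hL : (∫⁻ h in Ici (0:ℝ), ENNReal.ofReal
        |∫ μ in Ici (0:ℝ), _root_.sinc (2*μ*sγ) * Htilde c D μ (t+h) * Htilde c D μ t ∂G|
      ∂volume) < ⊤) :
    (∫⁻ μ in Ico (0:ℝ) (c/(2*D)), (ENNReal.ofReal (μ^2))⁻¹ ∂G) < ⊤ := by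
  have hb : 0 < c / (2*D) := div_pos hc (by positivity)
  set b := c / (2*D) with hbdef
  set F : ℝ → ℝ → ℝ :=
    fun μ h => _root_.sinc (2*μ*sγ) * Htilde c D μ (t+h) * Htilde c D μ t with hFdef
  set ε : ℝ := min (1/2) (b/2) with hεdef
  have hε0 : 0 < ε := lt_min (by norm_num) (by positivity)
  have hεb2 : ε ≤ b/2 := min_le_right _ _
  have hεhalf : ε ≤ 1/2 := min_le_left _ _
  have hεb : ε ≤ b := le_trans hεb2 (by linarith)
  set K : ℝ := Real.exp (-(4*D*ε^2*t))/8 with hKdef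
  have hK0 : 0 < K := by rw [hKdef]; positivity
  set σ : ℝ := min (D*ε^2) (c^2/(32*D)) with hσdef
  have hσ0 : 0 < σ := lt_min (by positivity) (by positivity)
  set Kt : ℝ := 256 * (G univ).toReal with hKtdef
  have hKt0 : 0 ≤ Kt := by rw [hKtdef]; positivity
  -- Claim 1 : pointwise lower bound on the low-frequency band
  have claim1 : ∀ μ ∈ Ico (0:ℝ) ε, ∀ h : ℝ, 0 ≤ h →
      K * Real.exp (-(2*D*μ^2*h)) ≤ F μ h := by
    rintro μ ⟨hμ0, hμε⟩ h hh
    have hμb : μ < b := lt_of_lt_of_le hμε hεb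
    have hth : (0:ℝ) ≤ t + h := by linarith
    have hx0 : 0 ≤ 2*μ*sγ := by positivity
    have hx1 : 2*μ*sγ ≤ 1 := by nlinarith
    have hs : 1/2 ≤ _root_.sinc (2*μ*sγ) := sinc_ge_half hx0 hx1
    have hH1 : Real.exp (-(2*D*μ^2*(t+h)))/2 ≤ Htilde c D μ (t+h) :=
      Htilde_ge hc hD hμ0 hμb hth
    have hH2 : Real.exp (-(2*D*μ^2*t))/2 ≤ Htilde c D μ t :=
      Htilde_ge hc hD hμ0 hμb ht
    have hA0 : (0:ℝ) < Real.exp (-(2*D*μ^2*(t+h)))/2 := by positivity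
    have hB0 : (0:ℝ) < Real.exp (-(2*D*μ^2*t))/2 := by positivity
    have hH10 : 0 ≤ Htilde c D μ (t+h) := le_trans hA0.le hH1
    have hH20 : 0 ≤ Htilde c D μ t := le_trans hB0.le hH2
    have s1 : (1/2) * (Real.exp (-(2*D*μ^2*(t+h)))/2) ≤ _root_.sinc (2*μ*sγ) * Htilde c D μ (t+h) :=
      mul_le_mul hs hH1 hA0.le (le_trans (by norm_num) hs)
    have s2 : ((1/2) * (Real.exp (-(2*D*μ^2*(t+h)))/2)) * (Real.exp (-(2*D*μ^2*t))/2)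
        ≤ F μ h :=
      mul_le_mul s1 hH2 hB0.le (le_trans (by positivity) s1)
    refine le_trans ?_ s2
    have heq : ((1/2) * (Real.exp (-(2*D*μ^2*(t+h)))/2)) * (Real.exp (-(2*D*μ^2*t))/2)
        = Real.exp (-(2*D*μ^2*(t+h)) + -(2*D*μ^2*t))/8 := by
      rw [Real.exp_add]; ring
    have heq2 : K * Real.exp (-(2*D*μ^2*h)) = Real.exp (-(4*D*ε^2*t) + -(2*D*μ^2*h))/8 := by
      rw [hKdef, Real.exp_add]; ring
    rw [heq, heq2]
    have hμ2 : μ^2 ≤ ε^2 := by nlinarith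
    have hDt : (0:ℝ) ≤ 4*D*t := by positivity
    have hle : -(4*D*ε^2*t) + -(2*D*μ^2*h) ≤ -(2*D*μ^2*(t+h)) + -(2*D*μ^2*t) := by nlinarith
    have := Real.exp_le_exp.mpr hle
    linarith
  -- Claim 2 : tail bound
  have hmtail : ∀ (s : Set ℝ) (h : ℝ), AEStronglyMeasurable (fun μ => F μ h) (G.restrict s) := by
    intro s h
    exact ((srd_FmeasAux c D t sγ).comp
      ((measurable_id.prodMk measurable_const) : Measurable fun μ : ℝ => (μ, h))
      ).aestronglyMeasurable
  have claim2 : ∀ h : ℝ, 0 ≤ h →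
      |∫ μ in Ici ε, F μ h ∂G| ≤ Kt * Real.exp (-(σ*h)) := by
    intro h hh
    have hth : (0:ℝ) ≤ t + h := by linarith
    have hC : ∀ μ ∈ Ici ε, ‖F μ h‖ ≤ 256 * Real.exp (-(σ*h)) := by
      intro μ hμ
      simp only [mem_Ici] at hμ
      have hμ0 : 0 ≤ μ := le_trans hε0.le hμ
      rw [Real.norm_eq_abs]
      have h1 := _root_.abs_sinc_le_one (2*μ*sγ)
      have h3 := Htilde_abs_le hc hD hμ0 ht
      have e : |F μ h| = |_root_.sinc (2*μ*sγ)| * |Htilde c D μ (t+h)| * |Htilde c D μ t| := by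
        rw [hFdef]; rw [abs_mul, abs_mul]
      have hε2μ2 : ε^2 ≤ μ^2 := by nlinarith
      rcases le_or_gt μ (b/2) with hcase | hcase
      · have hμb : μ < b := lt_of_le_of_lt hcase (by linarith)
        have hpos : 0 ≤ Htilde c D μ (t+h) :=
          le_trans (by positivity) (Htilde_ge hc hD hμ0 hμb hth)
        have h2 : |Htilde c D μ (t+h)| ≤ 2 * Real.exp (-(D*μ^2*(t+h))) := by
          rw [abs_of_nonneg hpos]
          exact Htilde_le_low hc hD hμ0 hcase hth
        rw [e]
        calc |_root_.sinc (2*μ*sγ)| * |Htilde c D μ (t+h)| * |Htilde c D μ t|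
            ≤ 1 * (2 * Real.exp (-(D*μ^2*(t+h)))) * 16 :=
              mul_le_mul (mul_le_mul h1 h2 (abs_nonneg _) zero_le_one) h3 (abs_nonneg _)
                (by positivity)
          _ = 32 * Real.exp (-(D*μ^2*(t+h))) := by ring
          _ ≤ 256 * Real.exp (-(σ*h)) := by
              apply mul_le_mul (by norm_num) _ (Real.exp_pos _).le (by norm_num)
              apply Real.exp_le_exp.mpr
              have e2 : σ ≤ D*ε^2 := min_le_left _ _
              have p1 : σ*h ≤ D*ε^2*h := mul_le_mul_of_nonneg_right e2 hh
              have p2 : D*ε^2*h ≤ D*μ^2*h := by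
                nlinarith [mul_le_mul_of_nonneg_left hε2μ2 (mul_nonneg hD.le hh)]
              have p3 : D*μ^2*h ≤ D*μ^2*(t+h) := by
                nlinarith [mul_nonneg (mul_nonneg hD.le (sq_nonneg μ)) ht]
              linarith
      · have h2 : |Htilde c D μ (t+h)| ≤ 16 * Real.exp (-(c^2*(t+h)/(32*D))) :=
          Htilde_le_high hc hD hcase.le hth
        rw [e]
        calc |_root_.sinc (2*μ*sγ)| * |Htilde c D μ (t+h)| * |Htilde c D μ t|
            ≤ 1 * (16 * Real.exp (-(c^2*(t+h)/(32*D)))) * 16 :=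
              mul_le_mul (mul_le_mul h1 h2 (abs_nonneg _) zero_le_one) h3 (abs_nonneg _)
                (by positivity)
          _ = 256 * Real.exp (-(c^2*(t+h)/(32*D))) := by ring
          _ ≤ 256 * Real.exp (-(σ*h)) := by
              apply mul_le_mul_of_nonneg_left _ (by norm_num)
              apply Real.exp_le_exp.mpr
              have e2 : σ ≤ c^2/(32*D) := min_le_right _ _
              have p1 : σ*h ≤ c^2/(32*D)*h := mul_le_mul_of_nonneg_right e2 hh
              have p2 : c^2/(32*D)*h ≤ c^2*(t+h)/(32*D) := by
                rw [div_mul_eq_mul_div, div_le_div_iff₀ (by positivity) (by positivity)]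
                nlinarith [sq_nonneg c, mul_nonneg (by positivity : (0:ℝ) ≤ c^2) ht]
              linarith
    have hnorm := norm_setIntegral_le_of_norm_le_const (μ := G) (s := Ici ε)
      (measure_lt_top G _) hC
    rw [Real.norm_eq_abs, measureReal_def] at hnorm
    refine le_trans hnorm ?_
    rw [hKtdef]
    have htR : (G (Ici ε)).toReal ≤ (G univ).toReal :=
      ENNReal.toReal_mono (measure_ne_top _ _) (measure_mono (subset_univ _))
    have := mul_le_mul_of_nonneg_left htR (by positivity : (0:ℝ) ≤ 256 * Real.exp (-(σ*h)))
    nlinarith [Real.exp_pos (-(σ*h)), ENNReal.toReal_nonneg (a := G univ)]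
  -- Claim 4 : real inequality for each h
  have claim4 : ∀ h : ℝ, 0 ≤ h →
      (∫ μ in Ico (0:ℝ) ε, K * Real.exp (-(2*D*μ^2*h)) ∂G)
        ≤ |∫ μ in Ici (0:ℝ), F μ h ∂G| + Kt * Real.exp (-(σ*h)) := by
    intro h hh
    have hintF := srd_Fint c D hc hD G t ht sγ hh
    have hintIco : IntegrableOn (fun μ => F μ h) (Ico 0 ε) G :=
      hintF.mono_set (fun x hx => hx.1)
    have hintIci : IntegrableOn (fun μ => F μ h) (Ici ε) G :=
      hintF.mono_set (Ici_subset_Ici.mpr hε0.le)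
    have hintL : IntegrableOn (fun μ => K * Real.exp (-(2*D*μ^2*h))) (Ico 0 ε) G := by
      refine Integrable.mono' (integrable_const K) ?_ ?_
      · exact (by fun_prop : Measurable fun μ : ℝ =>
          K * Real.exp (-(2*D*μ^2*h))).aestronglyMeasurable
      · filter_upwards [ae_restrict_mem measurableSet_Ico] with μ hμ
        rw [Real.norm_eq_abs, abs_of_nonneg (by positivity)]
        have hexp : Real.exp (-(2*D*μ^2*h)) ≤ 1 := by
          rw [Real.exp_le_one_iff]
          have : 0 ≤ 2*D*μ^2*h := by positivity
          linarith
        nlinarith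
    have hmono : (∫ μ in Ico (0:ℝ) ε, K * Real.exp (-(2*D*μ^2*h)) ∂G)
        ≤ ∫ μ in Ico (0:ℝ) ε, F μ h ∂G :=
      setIntegral_mono_on hintL hintIco measurableSet_Ico (fun μ hμ => claim1 μ hμ h hh)
    have hsplit : (∫ μ in Ici (0:ℝ), F μ h ∂G)
        = (∫ μ in Ico (0:ℝ) ε, F μ h ∂G) + ∫ μ in Ici ε, F μ h ∂G := by
      rw [← Ico_union_Ici_eq_Ici hε0.le]
      refine setIntegral_union ?_ measurableSet_Ici hintIco hintIci
      rw [Set.disjoint_left]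
      intro a ha hb'
      exact absurd hb' (not_le.mpr ha.2)
    have h2 := claim2 h hh
    have habs : (∫ μ in Ico (0:ℝ) ε, F μ h ∂G)
        ≤ |∫ μ in Ici (0:ℝ), F μ h ∂G| + Kt * Real.exp (-(σ*h)) := by
      have e1 : (∫ μ in Ico (0:ℝ) ε, F μ h ∂G)
          = (∫ μ in Ici (0:ℝ), F μ h ∂G) - ∫ μ in Ici ε, F μ h ∂G := by
        rw [hsplit]; ring
      rw [e1]
      have := abs_le.mp (le_refl |∫ μ in Ici ε, F μ h ∂G|) -- dummy
      have l1 : (∫ μ in Ici (0:ℝ), F μ h ∂G) ≤ |∫ μ in Ici (0:ℝ), F μ h ∂G| := le_abs_self _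
      have l2 : -(∫ μ in Ici ε, F μ h ∂G) ≤ |∫ μ in Ici ε, F μ h ∂G| := neg_le_abs _
      linarith
    linarith
  -- Claim 5 : finiteness of the lintegral of the left side of claim4
  have tail_meas : Measurable fun h : ℝ => ENNReal.ofReal (Kt * Real.exp (-(σ*h))) := by
    fun_prop
  have tail_int : (∫⁻ h in Ici (0:ℝ), ENNReal.ofReal (Kt * Real.exp (-(σ*h))) ∂volume) < ⊤ := by
    have : ∀ h : ℝ, ENNReal.ofReal (Kt * Real.exp (-(σ*h)))
        = ENNReal.ofReal Kt * ENNReal.ofReal (Real.exp (-(σ*h))) := fun h =>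
      ENNReal.ofReal_mul hKt0
    simp_rw [this]
    rw [lintegral_const_mul' _ _ ENNReal.ofReal_ne_top, lint_exp hσ0.le]
    exact ENNReal.mul_lt_top ENNReal.ofReal_lt_top
      (ENNReal.inv_lt_top.mpr (by simpa using hσ0))
  have claim5 : (∫⁻ h in Ici (0:ℝ),
      ENNReal.ofReal (∫ μ in Ico (0:ℝ) ε, K * Real.exp (-(2*D*μ^2*h)) ∂G) ∂volume) < ⊤ := by
    have hstep : (∫⁻ h in Ici (0:ℝ),
        ENNReal.ofReal (∫ μ in Ico (0:ℝ) ε, K * Real.exp (-(2*D*μ^2*h)) ∂G) ∂volume)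
        ≤ ∫⁻ h in Ici (0:ℝ),
            (ENNReal.ofReal |∫ μ in Ici (0:ℝ), F μ h ∂G|
              + ENNReal.ofReal (Kt * Real.exp (-(σ*h)))) ∂volume := by
      refine lintegral_mono_ae ?_
      filter_upwards [ae_restrict_mem measurableSet_Ici] with h hh
      refine le_trans (ENNReal.ofReal_le_ofReal (claim4 h hh)) ENNReal.ofReal_add_le
    rw [lintegral_add_right _ tail_meas] at hstep
    exact lt_of_le_of_lt hstep (ENNReal.add_lt_top.mpr ⟨hL, tail_int⟩)
  -- Claim 6 : compute via Tonelli
  have hgmeas : Measurable fun q : ℝ × ℝ => ENNReal.ofReal (K * Real.exp (-(2*D*q.2^2*q.1))) := by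
    fun_prop
  have claim6 : (∫⁻ h in Ici (0:ℝ),
      ENNReal.ofReal (∫ μ in Ico (0:ℝ) ε, K * Real.exp (-(2*D*μ^2*h)) ∂G) ∂volume)
      = ∫⁻ μ in Ico (0:ℝ) ε, ENNReal.ofReal K * (ENNReal.ofReal (2*D*μ^2))⁻¹ ∂G := by
    have e1 : (∫⁻ h in Ici (0:ℝ),
        ENNReal.ofReal (∫ μ in Ico (0:ℝ) ε, K * Real.exp (-(2*D*μ^2*h)) ∂G) ∂volume)
        = ∫⁻ h in Ici (0:ℝ), ∫⁻ μ in Ico (0:ℝ) ε,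
            ENNReal.ofReal (K * Real.exp (-(2*D*μ^2*h))) ∂G ∂volume := by
      apply setLIntegral_congr_fun measurableSet_Ici
      intro h hh
      apply ofReal_integral_eq_lintegral_ofReal
      · refine Integrable.mono' (integrable_const K) ?_ ?_
        · exact (by fun_prop : Measurable fun μ : ℝ =>
            K * Real.exp (-(2*D*μ^2*h))).aestronglyMeasurable
        · filter_upwards [ae_restrict_mem measurableSet_Ico] with μ hμ
          rw [Real.norm_eq_abs, abs_of_nonneg (by positivity)]
          have hexp : Real.exp (-(2*D*μ^2*h)) ≤ 1 := by
            rw [Real.exp_le_one_iff]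
            have h0 : (0:ℝ) ≤ h := hh
            have : 0 ≤ 2*D*μ^2*h := by positivity
            linarith
          nlinarith
      · exact ae_of_all _ fun μ => by positivity
    rw [e1]
    rw [lintegral_lintegral_swap (by exact hgmeas.aemeasurable)]
    apply setLIntegral_congr_fun measurableSet_Ico
    intro μ hμ
    have e2 : ∀ h : ℝ, ENNReal.ofReal (K * Real.exp (-(2*D*μ^2*h)))
        = ENNReal.ofReal K * ENNReal.ofReal (Real.exp (-(2*D*μ^2*h))) := fun h =>
      ENNReal.ofReal_mul hK0.le
    simp_rw [e2]
    rw [lintegral_const_mul' _ _ ENNReal.ofReal_ne_top, lint_exp (by positivity)]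
  -- Claim 7 : finiteness on Ico 0 ε
  have claim7 : (∫⁻ μ in Ico (0:ℝ) ε, (ENNReal.ofReal (μ^2))⁻¹ ∂G) < ⊤ := by
    set c₀ : ℝ≥0∞ := ENNReal.ofReal K * (ENNReal.ofReal (2*D))⁻¹ with hc₀def
    have hc₀0 : c₀ ≠ 0 := by
      rw [hc₀def]
      apply mul_ne_zero
      · simpa using hK0
      · exact ENNReal.inv_ne_zero.mpr ENNReal.ofReal_ne_top
    have hc₀top : c₀ ≠ ⊤ :=
      ENNReal.mul_ne_top ENNReal.ofReal_ne_top (ENNReal.inv_ne_top.mpr (by simpa using hD))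
    have heq : (∫⁻ μ in Ico (0:ℝ) ε, ENNReal.ofReal K * (ENNReal.ofReal (2*D*μ^2))⁻¹ ∂G)
        = c₀ * ∫⁻ μ in Ico (0:ℝ) ε, (ENNReal.ofReal (μ^2))⁻¹ ∂G := by
      rw [← lintegral_const_mul' _ _ hc₀top]
      apply setLIntegral_congr_fun measurableSet_Ico
      intro μ hμ
      rw [hc₀def]
      beta_reduce
      have : (2:ℝ)*D*μ^2 = (2*D)*(μ^2) := by ring
      rw [this, ENNReal.ofReal_mul (by positivity),
        ENNReal.mul_inv (Or.inl (by simpa using hD)) (Or.inl ENNReal.ofReal_ne_top), mul_assoc]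
    have hfin : c₀ * (∫⁻ μ in Ico (0:ℝ) ε, (ENNReal.ofReal (μ^2))⁻¹ ∂G) < ⊤ := by
      rw [← heq, ← claim6]; exact claim5
    by_contra hcon
    rw [not_lt, top_le_iff] at hcon
    rw [hcon, ENNReal.mul_top hc₀0] at hfin
    exact absurd hfin (lt_irrefl _)
  -- Claim 8 : extend to Ico 0 b
  have hsplit : Ico (0:ℝ) b = Ico 0 ε ∪ Ico ε b := (Ico_union_Ico_eq_Ico hε0.le hεb).symm
  rw [hsplit, lintegral_union measurableSet_Ico Ico_disjoint_Ico_same]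
  apply ENNReal.add_lt_top.mpr
  refine ⟨claim7, ?_⟩
  have hbound : (∫⁻ μ in Ico ε b, (ENNReal.ofReal (μ^2))⁻¹ ∂G)
      ≤ (ENNReal.ofReal (ε^2))⁻¹ * G (Ico ε b) := by
    rw [← setLIntegral_const]
    apply setLIntegral_mono' measurableSet_Ico
    intro μ hμ
    apply ENNReal.inv_le_inv'
    apply ENNReal.ofReal_le_ofReal
    nlinarith [hμ.1, hε0]
  refine lt_of_le_of_lt hbound (ENNReal.mul_lt_top ?_ (measure_lt_top _ _))
  exact ENNReal.inv_lt_top.mpr (by simpa using pow_pos hε0 2)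

end main

/-- Short-range dependence at angular distance `γ ∈ (0,π]`:
`∫_0^∞ |R(cos γ, t+h, t)| dh < ∞` if and only if
`∫_{[0,c/(2D))} μ⁻² G(dμ) < ∞` (the integrand being `+∞` at `μ = 0`), where
`R(cos γ, t, t') = ∫ _root_.sinc(2μ sin(γ/2)) H̃(μ,t) H̃(μ,t') G(dμ)`. -/
theorem short_range_dependence
    (c D : ℝ) (hc : 0 < c) (hD : 0 < D)
    (G : MeasureTheory.Measure ℝ) [MeasureTheory.IsFiniteMeasure G]
    (hG0 : G (Set.Iio 0) = 0) (t : ℝ) (ht : 0 ≤ t)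
    (γ : ℝ) (hγ : γ ∈ Set.Ioc 0 Real.pi) :
    (∫⁻ h in Set.Ici (0 : ℝ),
        ENNReal.ofReal
          |∫ μ in Set.Ici (0 : ℝ),
              _root_.sinc (2 * μ * Real.sin (γ / 2)) * Htilde c D μ (t + h) * Htilde c D μ t ∂G|
        ∂volume) < ⊤
      ↔ (∫⁻ μ in Set.Ico (0 : ℝ) (c / (2 * D)), (ENNReal.ofReal (μ ^ 2))⁻¹ ∂G) < ⊤ := by
  obtain ⟨hγ0, hγπ⟩ := hγ
  have hsγ0 : 0 < Real.sin (γ/2) :=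
    Real.sin_pos_of_pos_of_lt_pi (by linarith) (by linarith [Real.pi_pos])
  have hsγ1 : Real.sin (γ/2) ≤ 1 := Real.sin_le_one _
  constructor
  · intro hL
    exact srd_forward c D hc hD G t ht _ hsγ0 hsγ1 hL
  · intro hG
    exact srd_backward c D hc hD G t ht _ hG
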